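/- arXiv:2110.02783 — 2 statements merged into one kernel-verified Lean document; each statement's English description precedes it below -/
import Mathlib

section
/- With A the minimal DFA of Paths(N) for a sound deterministic negotiation N: every execution (not necessarily complete) of N_A is also an execution of N; consequently L(N_A) ⊆ L(N). -/
universe u v w

variable {P : Type u} {A : Type v}

/-- One swap of two adjacent independent letters. -/
def SwapStep (dom : A → Set P) (u v : List A) : Prop :=
  ∃ x y : List A, ∃ a b : A, dom a ∩ dom b = ∅ ∧
    u = x ++ a :: b :: y ∧ v = x ++ b :: a :: y

/-- Mazurkiewicz trace equivalence: reflexive-transitive-symmetric closure of swaps. -/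
def TraceEq (dom : A → Set P) : List A → List A → Prop :=
  Relation.EqvGen (SwapStep dom)

open Classical in
/-- Projection of a word on a process `p`: keep letters whose domain contains `p`. -/
noncomputable def proj (dom : A → Set P) (p : P) : List A → List A
  | [] => []
  | a :: w => if p ∈ dom a then a :: proj dom p w else proj dom p w

/-- A word `t` is co-prime with minimal letter `b` if every trace-equivalent word starts with `b`. -/
def CoPrime (dom : A → Set P) (t : List A) (b : A) : Prop :=
  ∀ v, TraceEq dom t v → ∃ v', v = b :: v'

/-- A `(b,p)`-step: `s = b·s'` is co-prime with minimal letter `b`, `p ∈ dom b`,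
and `b` is the only letter of `s` involving `p`. -/
def IsStep (dom : A → Set P) (s : List A) (b : A) (p : P) : Prop :=
  p ∈ dom b ∧ CoPrime dom s b ∧ ∃ s', s = b :: s' ∧ ∀ a ∈ s', p ∉ dom a

/-- A (deterministic) negotiation diagram. -/
structure Negotiation (P : Type u) (A : Type v) where
  Node : Type w
  dnode : Node → Set P
  ninit : Node
  nfin : Node
  tr : Node → A → P → Option Node

namespace Negotiation

/-- Well-formedness conditions of a negotiation diagram over distributed alphabet `dom`. -/
def WellFormed (N : Negotiation P A) (dom : A → Set P) : Prop :=
  (∀ n, (N.dnode n).Nonempty) ∧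
  N.dnode N.ninit = Set.univ ∧
  N.dnode N.nfin = Set.univ ∧
  (∀ n a p n', N.tr n a p = some n' →
    N.dnode n = dom a ∧ p ∈ dom a ∧ p ∈ N.dnode n' ∧
    ∀ q ∈ dom a, (N.tr n a q).isSome)

/-- Node `n` is enabled in configuration `C`. -/
def Enabled (N : Negotiation P A) (n : N.Node) (C : P → N.Node) : Prop :=
  ∀ p ∈ N.dnode n, C p = n

/-- `n` is the unique node enabled in `C`. -/
def UniqueEnabled (N : Negotiation P A) (n : N.Node) (C : P → N.Node) : Prop :=
  N.Enabled n C ∧ ∀ m, N.Enabled m C → m = n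

/-- A step of a negotiation on action `a` between configurations. -/
def Step (N : Negotiation P A) (dom : A → Set P) (C : P → N.Node) (a : A)
    (C' : P → N.Node) : Prop :=
  ∃ n, N.Enabled n C ∧ (∀ p ∈ dom a, N.tr n a p = some (C' p)) ∧
    ∀ p, p ∉ dom a → C' p = C p

/-- Execution of a word between configurations. -/
def Run (N : Negotiation P A) (dom : A → Set P) :
    (P → N.Node) → List A → (P → N.Node) → Prop
  | C, [], C' => C = C'
  | C, a :: word, C'' => ∃ C', N.Step dom C a C' ∧ N.Run dom C' word C''

/-- The initial configuration: all processes in the initial node. -/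
def Cinit (N : Negotiation P A) : P → N.Node := fun _ => N.ninit

/-- The final configuration: all processes in the final node. -/
def Cfin (N : Negotiation P A) : P → N.Node := fun _ => N.nfin

/-- The language of successful executions of `N`. -/
def Lang (N : Negotiation P A) (dom : A → Set P) (word : List A) : Prop :=
  N.Run dom N.Cinit word N.Cfin

/-- Soundness: every execution from the initial configuration extends to a successful one. -/
def Sound (N : Negotiation P A) (dom : A → Set P) : Prop :=
  ∀ word C, N.Run dom N.Cinit word C → ∃ v, N.Run dom C v N.Cfin

/-- A local path of process `p` in the graph of `N`. -/
def PPath (N : Negotiation P A) (p : P) : N.Node → List A → N.Node → Prop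
  | n, [], n' => n = n'
  | n, a :: word, n'' => ∃ n', N.tr n a p = some n' ∧ N.PPath p n' word n''

/-- A local path in the graph of `N`, labelled over the alphabet `A_dom` of pairs `(a,p)`. -/
def GPath (N : Negotiation P A) : N.Node → List (A × P) → N.Node → Prop
  | n, [], n' => n = n'
  | n, x :: word, n'' => ∃ n', N.tr n x.1 x.2 = some n' ∧ N.GPath n' word n''

/-- `Paths(N)`: labels of local paths from the initial to the final node. -/
def PathsL (N : Negotiation P A) : Set (List (A × P)) :=
  { w | N.GPath N.ninit w N.nfin }

end Negotiation

/-- A DFA with a partial transition function and a single final state. -/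
structure PDFA (B : Type v) where
  S : Type w
  init : S
  trd : S → B → Option S
  fin : S

/-- Run of a partial DFA on a word. -/
def DRun (D : PDFA B) : D.S → List B → D.S → Prop
  | s, [], s' => s = s'
  | s, x :: word, s'' => ∃ s', D.trd s x = some s' ∧ DRun D s' word s''

/-- Acceptance from a state. -/
def AccFrom (D : PDFA B) (s : D.S) (word : List B) : Prop := DRun D s word D.fin

/-- Acceptance of the DFA. -/
def Accepts (D : PDFA B) (word : List B) : Prop := AccFrom D D.init word

/-- Trimmed: every state reachable and co-reachable. -/
def Trimmed (D : PDFA B) : Prop :=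
  ∀ s, (∃ word, DRun D D.init word s) ∧ (∃ word, DRun D s word D.fin)

/-- `D` is (a copy of) the minimal DFA of `L`: it accepts `L`, is trimmed,
and states with equal residual languages are equal (Myhill–Nerode). -/
def DFAMinimalFor (D : PDFA B) (L : Set (List B)) : Prop :=
  (∀ word, Accepts D word ↔ word ∈ L) ∧ Trimmed D ∧
  ∀ s s', (∀ word, AccFrom D s word ↔ AccFrom D s' word) → s = s'

open Classical in
/-- The negotiation `N_A` associated with a dom-complete DFA over the alphabet `A × P`:
states become nodes, `dnode s = dom a` when some `(a,p)` is outgoing from `s`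
(and `Proc` otherwise, in particular at the final state), and transitions are inherited. -/
noncomputable def negOfDFA (dom : A → Set P) (D : PDFA (A × P)) : Negotiation P A where
  Node := D.S
  dnode := fun s =>
    if h : ∃ x : A × P, (D.trd s x).isSome then dom h.choose.1 else Set.univ
  ninit := D.init
  nfin := D.fin
  tr := fun s a p => D.trd s (a, p)

section AuxProof

variable {P : Type u} {A : Type v}

/-- Link: a DFA state and a negotiation node have the same residual path language. -/
def LinkSN (N : Negotiation P A) (D : PDFA (A × P)) (s : D.S) (n : N.Node) : Prop :=
  ∀ v, AccFrom D s v ↔ N.GPath n v N.nfin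

lemma link_init {N : Negotiation P A} {D : PDFA (A × P)}
    (hmin : DFAMinimalFor D N.PathsL) : LinkSN N D D.init N.ninit :=
  fun v => hmin.1 v

lemma link_step {N : Negotiation P A} {D : PDFA (A × P)} {s : D.S} {n : N.Node}
    {x : A × P} {t : D.S} {m : N.Node}
    (h : LinkSN N D s n) (ht : D.trd s x = some t) (hm : N.tr n x.1 x.2 = some m) :
    LinkSN N D t m := by
  intro v
  have h1 : AccFrom D t v ↔ AccFrom D s (x :: v) := by
    constructor
    · intro hv; exact ⟨t, ht, hv⟩
    · rintro ⟨t', ht', hv⟩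
      rw [ht] at ht'
      injection ht' with h'
      rwa [h']
  have h2 : N.GPath n (x :: v) N.nfin ↔ N.GPath m v N.nfin := by
    constructor
    · rintro ⟨m', hm', hv⟩
      rw [hm] at hm'
      injection hm' with h'
      rwa [h']
    · intro hv; exact ⟨m, hm, hv⟩
  rw [h1, h (x :: v), h2]

lemma tr_isSome_of_link {N : Negotiation P A} {D : PDFA (A × P)} {s : D.S} {n : N.Node}
    {x : A × P} {t : D.S}
    (htrim : Trimmed D) (h : LinkSN N D s n) (ht : D.trd s x = some t) :
    ∃ m, N.tr n x.1 x.2 = some m := by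
  obtain ⟨v, hv⟩ := (htrim t).2
  have hacc : AccFrom D s (x :: v) := ⟨t, ht, hv⟩
  obtain ⟨m, hm, -⟩ := (h (x :: v)).mp hacc
  exact ⟨m, hm⟩

lemma run_append {N : Negotiation P A} {dom : A → Set P} :
    ∀ (u : List A) {v : List A} {C C₂ C₃ : P → N.Node},
      N.Run dom C u C₂ → N.Run dom C₂ v C₃ → N.Run dom C (u ++ v) C₃ := by
  intro u
  induction u with
  | nil => intro v C C₂ C₃ h1 h2; cases h1; exact h2
  | cons a u ih =>
    rintro v C C₂ C₃ ⟨C₁, hst, hr⟩ h2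
    exact ⟨C₁, hst, ih hr h2⟩

lemma run_gpath {N : Negotiation P A} {dom : A → Set P} (hWF : N.WellFormed dom) :
    ∀ (v : List A) (C C₂ : P → N.Node), N.Run dom C v C₂ →
      ∀ p, ∃ u, N.GPath (C p) u (C₂ p) := by
  intro v
  induction v with
  | nil => intro C C₂ h p; cases h; exact ⟨[], rfl⟩
  | cons a v ih =>
    rintro C C₂ ⟨C₁, ⟨n, hEn, htr, hout⟩, hr⟩ p
    obtain ⟨u, hu⟩ := ih C₁ C₂ hr p
    by_cases hp : p ∈ dom a
    · have htp := htr p hp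
      have hdn : N.dnode n = dom a := (hWF.2.2.2 n a p _ htp).1
      have hCp : C p = n := hEn p (hdn ▸ hp)
      exact ⟨(a, p) :: u, by rw [hCp]; exact ⟨C₁ p, htp, hu⟩⟩
    · rw [← hout p hp]; exact ⟨u, hu⟩

lemma mem_dnode_of_run {N : Negotiation P A} {dom : A → Set P} (hWF : N.WellFormed dom) :
    ∀ (v : List A) (C C₂ : P → N.Node), N.Run dom C v C₂ →
      (∀ p, p ∈ N.dnode (C p)) → ∀ p, p ∈ N.dnode (C₂ p) := by
  intro v
  induction v with
  | nil => intro C C₂ h hm p; cases h; exact hm p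
  | cons a v ih =>
    rintro C C₂ ⟨C₁, ⟨n, hEn, htr, hout⟩, hr⟩ hm
    refine ih C₁ C₂ hr ?_
    intro p
    by_cases hp : p ∈ dom a
    · exact (hWF.2.2.2 n a p _ (htr p hp)).2.2.1
    · rw [hout p hp]; exact hm p

lemma mem_dnode_of_initrun {N : Negotiation P A} {dom : A → Set P} (hWF : N.WellFormed dom)
    {u : List A} {C : P → N.Node} (h : N.Run dom N.Cinit u C) :
    ∀ p, p ∈ N.dnode (C p) := by
  refine mem_dnode_of_run hWF u _ _ h ?_
  intro p
  show p ∈ N.dnode N.ninit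
  rw [hWF.2.1]; trivial

/-- If two processes sit at distinct nodes, each a member of both domains, the run deadlocks. -/
lemma no_run_of_split {N : Negotiation P A} {dom : A → Set P} (hWF : N.WellFormed dom) :
    ∀ (v : List A) (C : P → N.Node) (p q : P),
      C p ≠ C q → p ∈ N.dnode (C p) → q ∈ N.dnode (C p) →
      p ∈ N.dnode (C q) → q ∈ N.dnode (C q) →
      ¬ N.Run dom C v N.Cfin := by
  intro v
  induction v with
  | nil =>
    intro C p q hne _ _ _ _ h
    cases h
    exact hne rfl
  | cons a v ih =>
    rintro C p q hne hpp hqp hpq hqq ⟨C₁, ⟨n, hEn, htr, hout⟩, hr⟩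
    by_cases hp : p ∈ dom a
    · have hdn : N.dnode n = dom a := (hWF.2.2.2 n a p _ (htr p hp)).1
      have hCp : C p = n := hEn p (hdn ▸ hp)
      have hq : q ∈ dom a := by rw [← hdn, ← hCp]; exact hqp
      have hCq : C q = n := hEn q (hdn ▸ hq)
      exact hne (hCp.trans hCq.symm)
    · by_cases hq : q ∈ dom a
      · have hdn : N.dnode n = dom a := (hWF.2.2.2 n a q _ (htr q hq)).1
        have hCq : C q = n := hEn q (hdn ▸ hq)
        have hp' : p ∈ dom a := by rw [← hdn, ← hCq]; exact hpq
        exact hp hp'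
      · have e1 : C₁ p = C p := hout p hp
        have e2 : C₁ q = C q := hout q hq
        exact ih C₁ p q (by rw [e1, e2]; exact hne)
          (by rw [e1]; exact hpp) (by rw [e1]; exact hqp)
          (by rw [e2]; exact hpq) (by rw [e2]; exact hqq) hr

/-- Two processes linked to the same DFA state sit at the same node, in a reachable
configuration of a sound negotiation. -/
lemma node_eq_of_link {N : Negotiation P A} {dom : A → Set P} {D : PDFA (A × P)}
    (hWF : N.WellFormed dom) (hS : N.Sound dom)
    {u : List A} {C : P → N.Node} (hu : N.Run dom N.Cinit u C)
    {p q : P} {s : D.S}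
    (h1 : LinkSN N D s (C p)) (h2 : LinkSN N D s (C q)) : C p = C q := by
  by_contra hne
  obtain ⟨v, hv⟩ := hS u C hu
  obtain ⟨w1, hw1⟩ := run_gpath hWF v C N.Cfin hv p
  have hmem := mem_dnode_of_initrun hWF hu
  cases w1 with
  | nil =>
    have hfp : C p = N.nfin := hw1
    have hacc : AccFrom D s [] := (h1 []).mpr hw1
    have hfq : C q = N.nfin := (h2 []).mp hacc
    exact hne (hfp.trans hfq.symm)
  | cons x w1' =>
    obtain ⟨m', hx, -⟩ := id hw1
    have hdp : N.dnode (C p) = dom x.1 := (hWF.2.2.2 _ x.1 x.2 m' hx).1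
    have hacc : AccFrom D s (x :: w1') := (h1 _).mpr hw1
    obtain ⟨m'', hx2, -⟩ := (h2 _).mp hacc
    have hdq : N.dnode (C q) = dom x.1 := (hWF.2.2.2 _ x.1 x.2 m'' hx2).1
    refine no_run_of_split hWF v C p q hne (hmem p) ?_ ?_ (hmem q) hv
    · rw [hdp, ← hdq]; exact hmem q
    · rw [hdq, ← hdp]; exact hmem p

/-- Main simulation lemma. -/
lemma sim_main {dom : A → Set P} (hdom : ∀ a, (dom a).Nonempty)
    {N : Negotiation P A} (hWF : N.WellFormed dom) (hS : N.Sound dom)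
    {D : PDFA (A × P)} (hmin : DFAMinimalFor D N.PathsL) :
    ∀ (w : List A) (C₀ C : P → (negOfDFA dom D).Node),
      (negOfDFA dom D).Run dom C₀ w C →
      ∀ (C₀' : P → N.Node) (u : List A), N.Run dom N.Cinit u C₀' →
        (∀ p, LinkSN N D (C₀ p) (C₀' p)) →
        ∃ C', N.Run dom C₀' w C' ∧ (∀ p, LinkSN N D (C p) (C' p)) ∧
          N.Run dom N.Cinit (u ++ w) C' := by
  intro w
  induction w with
  | nil =>
    intro C₀ C hrun C₀' u hu hlink
    cases hrun
    exact ⟨C₀', rfl, hlink, by rw [List.append_nil]; exact hu⟩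
  | cons a w ih =>
    rintro C₀ C ⟨C₁, ⟨s, hEn, htr, hout⟩, hrun'⟩ C₀' u hu hlink
    obtain ⟨p₀, hp₀⟩ := hdom a
    have htrp₀ : D.trd s (a, p₀) = some (C₁ p₀) := htr p₀ hp₀
    have hsome : ∃ x : A × P, (D.trd s x).isSome := ⟨(a, p₀), by rw [htrp₀]; rfl⟩
    have hdn : (negOfDFA dom D).dnode s = dom hsome.choose.1 := dif_pos hsome
    obtain ⟨t_c, htc⟩ := Option.isSome_iff_exists.mp hsome.choose_spec
    obtain ⟨q₀, hq₀⟩ := hdom hsome.choose.1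
    have hq₀' : C₀ q₀ = s := hEn q₀ (by rw [hdn]; exact hq₀)
    have hlink_sn : LinkSN N D s (C₀' q₀) := by rw [← hq₀']; exact hlink q₀
    obtain ⟨m_c, hmc⟩ := tr_isSome_of_link hmin.2.1 hlink_sn htc
    have hdnc : N.dnode (C₀' q₀) = dom hsome.choose.1 :=
      (hWF.2.2.2 _ hsome.choose.1 hsome.choose.2 m_c hmc).1
    obtain ⟨m₀, hm₀⟩ := tr_isSome_of_link hmin.2.1 hlink_sn htrp₀
    have hdna : N.dnode (C₀' q₀) = dom a := (hWF.2.2.2 _ a p₀ m₀ hm₀).1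
    have hdomeq : dom hsome.choose.1 = dom a := by rw [← hdnc, hdna]
    have hCs : ∀ q ∈ dom a, C₀ q = s := by
      intro q hq
      exact hEn q (by rw [hdn, hdomeq]; exact hq)
    have hCn : ∀ q ∈ dom a, C₀' q = C₀' q₀ := by
      intro q hq
      refine node_eq_of_link hWF hS hu ?_ hlink_sn
      rw [← hCs q hq]; exact hlink q
    have htrall : ∀ q ∈ dom a, ∃ m, N.tr (C₀' q₀) a q = some m := by
      intro q hq
      exact Option.isSome_iff_exists.mp ((hWF.2.2.2 _ a p₀ m₀ hm₀).2.2.2 q hq)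
    have htrnone : ∀ q, q ∉ dom a → N.tr (C₀' q₀) a q = none := by
      intro q hq
      cases h : N.tr (C₀' q₀) a q with
      | none => rfl
      | some m => exact absurd (hWF.2.2.2 _ a q m h).2.1 hq
    set C₁' : P → N.Node := fun q => (N.tr (C₀' q₀) a q).getD (C₀' q) with hC₁'
    have hC₁some : ∀ q ∈ dom a, N.tr (C₀' q₀) a q = some (C₁' q) := by
      intro q hq
      obtain ⟨m, hm⟩ := htrall q hq
      simp [hC₁', hm]
    have hC₁out : ∀ q, q ∉ dom a → C₁' q = C₀' q := by
      intro q hq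
      simp [hC₁', htrnone q hq]
    have hstepN : N.Step dom C₀' a C₁' := by
      refine ⟨C₀' q₀, ?_, hC₁some, hC₁out⟩
      intro q hq
      exact hCn q (by rw [← hdna]; exact hq)
    have hu1 : N.Run dom N.Cinit (u ++ [a]) C₁' := run_append u hu ⟨C₁', hstepN, rfl⟩
    have hlink1 : ∀ p, LinkSN N D (C₁ p) (C₁' p) := by
      intro p
      by_cases hp : p ∈ dom a
      · exact link_step hlink_sn (htr p hp) (hC₁some p hp)
      · rw [hout p hp, hC₁out p hp]; exact hlink p
    obtain ⟨C', hrunN, hlinkC, hfull⟩ := ih C₁ C hrun' C₁' (u ++ [a]) hu1 hlink1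
    refine ⟨C', ⟨C₁', hstepN, hrunN⟩, hlinkC, ?_⟩
    rw [← List.singleton_append, ← List.append_assoc]
    exact hfull

end AuxProof

/-- Every execution (not necessarily complete) of `N_A` is an execution of `N`;
consequently `L(N_A) ⊆ L(N)`. -/
theorem negOfDFA_executions_subset [Finite P] [Finite A] (dom : A → Set P)
    (hdom : ∀ a, (dom a).Nonempty) (N : Negotiation P A) [Finite N.Node]
    (hWF : N.WellFormed dom)
    (hfin : ∀ a p, N.tr N.nfin a p = none)
    (hS : N.Sound dom)
    (D : PDFA (A × P)) (hmin : DFAMinimalFor D N.PathsL) :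
    (∀ (w : List A) (C : P → (negOfDFA dom D).Node),
      (negOfDFA dom D).Run dom (negOfDFA dom D).Cinit w C →
        ∃ C', N.Run dom N.Cinit w C') ∧
    (∀ w, (negOfDFA dom D).Lang dom w → N.Lang dom w) := by
  constructor
  · intro w C hrun
    obtain ⟨C', h1, -, -⟩ := sim_main hdom hWF hS hmin w _ C hrun N.Cinit [] rfl
      (fun _ => link_init hmin)
    exact ⟨C', h1⟩
  · intro w hw
    obtain ⟨C', h1, hlinkC, -⟩ := sim_main hdom hWF hS hmin w _ _ hw N.Cinit [] rfl
      (fun _ => link_init hmin)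
    have hC' : C' = N.Cfin := by
      funext p
      have hacc : AccFrom D D.fin [] := rfl
      exact (hlinkC p []).mp hacc
    show N.Run dom N.Cinit w N.Cfin
    rw [← hC']
    exact h1
end

section
/- A chain of steps along a local path is co-prime: let s_1, …, s_k be words where each s_i is an (a_i, p_i)-step, and for each i < k the actions a_i and a_{i+1} share a process (p_{i+1} ∈ dom(a_i) ∩ dom(a_{i+1})). Then the concatenation s_1 s_2 ⋯ s_k is co-prime with minimal letter a_1. -/
universe u v w

variable {P : Type u} {A : Type v}

/- ### Auxiliary lemmas -/

lemma proj_cons_pos (dom : A → Set P) (q : P) (b : A) (w : List A) (h : q ∈ dom b) :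
    proj dom q (b :: w) = b :: proj dom q w := by
  simp [proj, h]

lemma proj_cons_neg (dom : A → Set P) (q : P) (b : A) (w : List A) (h : q ∉ dom b) :
    proj dom q (b :: w) = proj dom q w := by
  simp [proj, h]

lemma proj_append (dom : A → Set P) (q : P) (u w : List A) :
    proj dom q (u ++ w) = proj dom q u ++ proj dom q w := by
  induction u with
  | nil => simp [proj]
  | cons b u ih =>
    by_cases h : q ∈ dom b
    · simp [proj_cons_pos dom q b _ h, ih]
    · simp [proj_cons_neg dom q b _ h, ih]

lemma proj_eq_nil (dom : A → Set P) (q : P) (u : List A) (h : ∀ e ∈ u, q ∉ dom e) :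
    proj dom q u = [] := by
  induction u with
  | nil => rfl
  | cons b u ih =>
    rw [proj_cons_neg dom q b u (h b (List.mem_cons_self))]
    exact ih fun e he => h e (List.mem_cons_of_mem _ he)

lemma proj_swapStep (dom : A → Set P) {u v : List A} (h : SwapStep dom u v) (q : P) :
    proj dom q u = proj dom q v := by
  obtain ⟨x, y, b, c, hbc, hu, hv⟩ := h
  subst hu; subst hv
  rw [proj_append, proj_append]
  congr 1
  by_cases hb : q ∈ dom b <;> by_cases hc : q ∈ dom c
  · exact absurd (hbc ▸ Set.mem_inter hb hc) (Set.notMem_empty q)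
  · rw [proj_cons_pos dom q b _ hb, proj_cons_neg dom q c _ hc,
      proj_cons_neg dom q c _ hc, proj_cons_pos dom q b _ hb]
  · rw [proj_cons_neg dom q b _ hb, proj_cons_pos dom q c _ hc,
      proj_cons_pos dom q c _ hc, proj_cons_neg dom q b _ hb]
  · rw [proj_cons_neg dom q b _ hb, proj_cons_neg dom q c _ hc,
      proj_cons_neg dom q c _ hc, proj_cons_neg dom q b _ hb]

lemma proj_traceEq (dom : A → Set P) {u v : List A} (h : TraceEq dom u v) (q : P) :
    proj dom q u = proj dom q v := by
  induction h with
  | rel _ _ h => exact proj_swapStep dom h q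
  | refl _ => rfl
  | symm _ _ _ ih => exact ih.symm
  | trans _ _ _ _ _ ih1 ih2 => exact ih1.trans ih2

lemma traceEq_cons (dom : A → Set P) (e : A) {u v : List A} (h : TraceEq dom u v) :
    TraceEq dom (e :: u) (e :: v) := by
  induction h with
  | rel u v h =>
    obtain ⟨x, y, b, c, hbc, hu, hv⟩ := h
    exact Relation.EqvGen.rel _ _ ⟨e :: x, y, b, c, hbc, by simp [hu], by simp [hv]⟩
  | refl _ => exact Relation.EqvGen.refl _
  | symm _ _ _ ih => exact Relation.EqvGen.symm _ _ ih
  | trans _ _ _ _ _ ih1 ih2 => exact Relation.EqvGen.trans _ _ _ ih1 ih2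

/-- Bubbling a letter independent of a prefix to the front. -/
lemma traceEq_bubble (dom : A → Set P) (c : A) :
    ∀ (x : List A) (y : List A), (∀ e ∈ x, dom e ∩ dom c = ∅) →
      TraceEq dom (x ++ c :: y) (c :: (x ++ y)) := by
  intro x
  induction x with
  | nil => intro y _; exact Relation.EqvGen.refl _
  | cons e x ih =>
    intro y hx
    have h1 : TraceEq dom (e :: (x ++ c :: y)) (e :: c :: (x ++ y)) :=
      traceEq_cons dom e (ih y fun a ha => hx a (List.mem_cons_of_mem _ ha))
    have h2 : TraceEq dom (e :: c :: (x ++ y)) (c :: e :: (x ++ y)) :=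
      Relation.EqvGen.rel _ _ ⟨[], x ++ y, e, c, hx e (List.mem_cons_self), rfl, rfl⟩
    exact Relation.EqvGen.trans _ _ _ h1 h2

/-- If a letter of a co-prime word can be bubbled to the front, it is the minimal letter. -/
lemma coprime_head (dom : A → Set P) {t : List A} {b c : A} {x y : List A}
    (hcp : CoPrime dom t b) (ht : t = x ++ c :: y)
    (hx : ∀ e ∈ x, dom e ∩ dom c = ∅) : c = b := by
  obtain ⟨v', hv⟩ := hcp (c :: (x ++ y)) (ht ▸ traceEq_bubble dom c x y hx)
  exact (List.cons_eq_cons.mp hv).1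

/-- First letter of a word whose domain meets `dom c`. -/
lemma exists_first (dom : A → Set P) (c : A) :
    ∀ u : List A, (∃ e ∈ u, (dom e ∩ dom c).Nonempty) →
      ∃ x d y, u = x ++ d :: y ∧ (∀ e ∈ x, dom e ∩ dom c = ∅) ∧
        (dom d ∩ dom c).Nonempty := by
  intro u
  induction u with
  | nil => rintro ⟨e, he, -⟩; cases he
  | cons b u ih =>
    intro h
    by_cases hb : (dom b ∩ dom c).Nonempty
    · exact ⟨[], b, u, rfl, by simp, hb⟩
    · have h' : ∃ e ∈ u, (dom e ∩ dom c).Nonempty := by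
        obtain ⟨e, he, hne⟩ := h
        rcases List.mem_cons.mp he with rfl | he'
        · exact absurd hne hb
        · exact ⟨e, he', hne⟩
      obtain ⟨x, d, y, h1, h2, h3⟩ := ih h'
      refine ⟨b :: x, d, y, by simp [h1], ?_, h3⟩
      intro e he
      rcases List.mem_cons.mp he with rfl | he'
      · exact Set.not_nonempty_iff_eq_empty.mp hb
      · exact h2 e he'

lemma join_range_succ (s : ℕ → List A) (k : ℕ) :
    ((List.range (k + 1)).map s).flatten
      = s 0 ++ ((List.range k).map fun i => s (i + 1)).flatten := by
  rw [List.range_succ_eq_map]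
  simp only [List.flatten, List.map_cons, List.flatten_cons, List.map_map]
  rfl

/-- Key lemma: any letter all of whose projections start the joined chain must be `a 0`. -/
lemma chain_aux (dom : A → Set P) (hdom : ∀ a, (dom a).Nonempty) :
    ∀ k : ℕ, 0 < k → ∀ (s : ℕ → List A) (a : ℕ → A) (p : ℕ → P),
      (∀ i < k, IsStep dom (s i) (a i) (p i)) →
      (∀ i, i + 1 < k → p (i + 1) ∈ dom (a i) ∧ p (i + 1) ∈ dom (a (i + 1))) →
      ∀ c : A,
        (∀ q ∈ dom c, (proj dom q (((List.range k).map s).flatten)).head? = some c) →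
        c = a 0 := by
  intro k
  induction k with
  | zero => intro h; exact absurd h (lt_irrefl 0)
  | succ k ih =>
    intro _ s a p hstep hshare c hc
    have hjoin := join_range_succ s k
    by_cases hA : ∃ e ∈ s 0, (dom e ∩ dom c).Nonempty
    · -- some letter of `s 0` depends on `c`; the first such letter is `c` itself
      obtain ⟨x, d, y, h1, h2, h3⟩ := exists_first dom c (s 0) hA
      obtain ⟨q, hqd, hqc⟩ := h3
      have hxq : ∀ e ∈ x, q ∉ dom e := by
        intro e he hqe
        exact absurd (h2 e he ▸ Set.mem_inter hqe hqc) (Set.notMem_empty q)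
      have hproj : (proj dom q (((List.range (k + 1)).map s).flatten)).head? = some d := by
        rw [hjoin, proj_append, h1, proj_append, proj_eq_nil dom q x hxq,
          proj_cons_pos dom q d y hqd]
        rfl
      have hdc : d = c := by
        have := (hproj.symm.trans (hc q hqc))
        exact Option.some.inj this
      subst hdc
      exact coprime_head dom (hstep 0 (Nat.succ_pos k)).2.1 h1 h2
    · -- no letter of `s 0` depends on `c`
      push_neg at hA
      have hA' : ∀ e ∈ s 0, ∀ q ∈ dom c, q ∉ dom e := by
        intro e he q hq hqe
        exact absurd (Set.mem_inter hqe hq) ((hA e he) ▸ Set.notMem_empty q)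
      have hs0nil : ∀ q ∈ dom c, proj dom q (s 0) = [] := fun q hq =>
        proj_eq_nil dom q (s 0) fun e he => hA' e he q hq
      rcases Nat.eq_zero_or_pos k with rfl | hkpos
      · -- chain of length 1: contradiction since `dom c` is nonempty
        obtain ⟨q, hq⟩ := hdom c
        have := hc q hq
        rw [join_range_succ, proj_append, hs0nil q hq] at this
        simp [proj] at this
      · -- apply the induction hypothesis to the shifted chain
        have hc' : ∀ q ∈ dom c,
            (proj dom q (((List.range k).map fun i => s (i + 1)).flatten)).head? = some c := by
          intro q hq
          have := hc q hq
          rwa [hjoin, proj_append, hs0nil q hq, List.nil_append] at this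
        have hca1 : c = a 1 :=
          ih hkpos (fun i => s (i + 1)) (fun i => a (i + 1)) (fun i => p (i + 1))
            (fun i hi => hstep (i + 1) (by omega))
            (fun i hi => hshare (i + 1) (by omega)) c hc'
        -- but `p 1 ∈ dom (a 0) ∩ dom (a 1)` contradicts independence of `c` from `s 0`
        obtain ⟨h01, h11⟩ := hshare 0 (by omega)
        obtain ⟨s0', hs0', -⟩ := (hstep 0 (Nat.succ_pos k)).2.2
        have ha0mem : a 0 ∈ s 0 := by rw [hs0']; exact List.mem_cons_self
        exact absurd h01 (hA' (a 0) ha0mem (p 1) (hca1 ▸ h11))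

/-- A chain of steps along a local path is co-prime: concatenating
`(a_i,p_i)`-steps where consecutive actions share the process `p_{i+1}`
yields a co-prime word with minimal letter `a_0`. -/
theorem chain_of_steps_coprime [Finite P] [Finite A] (dom : A → Set P)
    (hdom : ∀ a, (dom a).Nonempty) (k : ℕ) (hk : 0 < k)
    (s : ℕ → List A) (a : ℕ → A) (p : ℕ → P)
    (hstep : ∀ i < k, IsStep dom (s i) (a i) (p i))
    (hshare : ∀ i, i + 1 < k →
      p (i + 1) ∈ dom (a i) ∧ p (i + 1) ∈ dom (a (i + 1))) :
    CoPrime dom (((List.range k).map s).flatten) (a 0) := by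
  intro v hv
  obtain ⟨k, rfl⟩ : ∃ k', k = k' + 1 := ⟨k - 1, by omega⟩
  have hprojeq : ∀ q : P, proj dom q (((List.range (k + 1)).map s).flatten) = proj dom q v :=
    fun q => proj_traceEq dom hv q
  obtain ⟨s0', hs0', -⟩ := (hstep 0 (Nat.succ_pos k)).2.2
  obtain ⟨q0, hq0⟩ := hdom (a 0)
  have htne : proj dom q0 (((List.range (k + 1)).map s).flatten) ≠ [] := by
    rw [join_range_succ, proj_append, hs0', proj_cons_pos dom q0 _ _ hq0]
    simp
  cases v with
  | nil =>
    exact absurd ((hprojeq q0).trans rfl) htne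
  | cons c v' =>
    refine ⟨v', ?_⟩
    have hc : ∀ q ∈ dom c,
        (proj dom q (((List.range (k + 1)).map s).flatten)).head? = some c := by
      intro q hq
      rw [hprojeq q, proj_cons_pos dom q c v' hq]
      rfl
    have := chain_aux dom hdom (k + 1) (Nat.succ_pos k) s a p hstep hshare c hc
    rw [this]
end
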